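/- Let ψ : (m,∞) → ℝ be differentiable with x·ψ'(x) = ε₁(x)·ψ(x) where ε₁(x)·ψ(x) ≥ l₁ ≥ 1 for all x > m (slow variation case). Then ψ is strictly increasing on (m,∞) and (log ψ⁻¹)'(y) = 1/(ψ⁻¹(y)·ψ'(ψ⁻¹(y))) ≤ 1/l₁ for all y in the range of ψ. -/

import Mathlib

theorem stmt18 (m l₁ : ℝ) (hm : 0 < m) (hl₁ : 1 ≤ l₁)
    (ψ ψ' φ ε₁ : ℝ → ℝ)
    (hderiv : ∀ x ∈ Set.Ioi m, HasDerivAt ψ (ψ' x) x)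
    (hslow : ∀ x ∈ Set.Ioi m, x * ψ' x = ε₁ x * ψ x)
    (hlow : ∀ x ∈ Set.Ioi m, l₁ ≤ ε₁ x * ψ x)
    (hinv : ∀ x ∈ Set.Ioi m, φ (ψ x) = x)
    (hrinv : ∀ y ∈ ψ '' Set.Ioi m, ψ (φ y) = y)
    (hφcont : ContinuousOn φ (ψ '' Set.Ioi m)) :
    StrictMonoOn ψ (Set.Ioi m) ∧
    ∀ x ∈ Set.Ioi m,
      HasDerivAt (fun y => Real.log (φ y)) (1 / (φ (ψ x) * ψ' (φ (ψ x)))) (ψ x) ∧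
      1 / (φ (ψ x) * ψ' (φ (ψ x))) ≤ 1 / l₁ := by
  have hl₁pos : (0:ℝ) < l₁ := lt_of_lt_of_le one_pos hl₁
  have hψ'pos : ∀ x ∈ Set.Ioi m, 0 < ψ' x := by
    intro x hx
    have hxpos : 0 < x := lt_trans hm hx
    have h1 : (0:ℝ) < x * ψ' x := by
      rw [hslow x hx]
      exact lt_of_lt_of_le hl₁pos (hlow x hx)
    nlinarith
  have hcont : ContinuousOn ψ (Set.Ioi m) :=
    fun x hx => (hderiv x hx).continuousAt.continuousWithinAt
  have hmono : StrictMonoOn ψ (Set.Ioi m) := by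
    apply strictMonoOn_of_deriv_pos (convex_Ioi m) hcont
    intro x hx
    rw [interior_Ioi] at hx
    rw [(hderiv x hx).deriv]
    exact hψ'pos x hx
  refine ⟨hmono, fun x hx => ?_⟩
  -- the image is a neighborhood of ψ x
  have hnbhd : ψ '' Set.Ioi m ∈ nhds (ψ x) := by
    obtain ⟨a, ha, hax⟩ : ∃ a, m < a ∧ a < x := ⟨(m + x)/2, by simp [Set.mem_Ioi] at hx ⊢; constructor <;> linarith [hx]⟩
    set b := x + 1 with hb
    have hxb : x < b := by simp [hb]
    have hab : a ≤ b := le_of_lt (hax.trans hxb)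
    have hIcc : Set.Icc a b ⊆ Set.Ioi m := fun z hz => lt_of_lt_of_le ha hz.1
    have hivt : Set.Ioo (ψ a) (ψ b) ⊆ ψ '' Set.Ioo a b :=
      intermediate_value_Ioo hab (hcont.mono hIcc)
    have hsub : ψ '' Set.Ioo a b ⊆ ψ '' Set.Ioi m :=
      Set.image_mono (fun z hz => lt_trans ha hz.1)
    have hmem : ψ x ∈ Set.Ioo (ψ a) (ψ b) :=
      ⟨hmono (Set.mem_Ioi.mpr ha) hx hax,
       hmono hx (Set.mem_Ioi.mpr (lt_trans (lt_trans ha hax) hxb)) hxb⟩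
    exact Filter.mem_of_superset (isOpen_Ioo.mem_nhds hmem) (hsub.trans' hivt)
  have hφat : ContinuousAt φ (ψ x) := hφcont.continuousAt hnbhd
  have hψx : φ (ψ x) = x := hinv x hx
  have hψ'ne : ψ' x ≠ 0 := ne_of_gt (hψ'pos x hx)
  have hφderiv : HasDerivAt φ (ψ' x)⁻¹ (ψ x) := by
    apply HasDerivAt.of_local_left_inverse hφat (by rw [hψx]; exact hderiv x hx) hψ'ne
    exact Filter.eventually_of_mem hnbhd (fun y hy => hrinv y hy)
  have hxpos : 0 < x := lt_trans hm hx
  have hφne : φ (ψ x) ≠ 0 := by rw [hψx]; exact ne_of_gt hxpos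
  have hlog : HasDerivAt (fun y => Real.log (φ y)) ((ψ' x)⁻¹ / φ (ψ x)) (ψ x) :=
    hφderiv.log hφne
  have heq : (ψ' x)⁻¹ / φ (ψ x) = 1 / (φ (ψ x) * ψ' (φ (ψ x))) := by
    rw [hψx]; field_simp
  constructor
  · rw [← heq]; exact hlog
  · rw [hψx]
    have h1 : x * ψ' x = ε₁ x * ψ x := hslow x hx
    have h2 : l₁ ≤ x * ψ' x := h1 ▸ hlow x hx
    exact one_div_le_one_div_of_le hl₁pos h2
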